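/- For tensorized Chebyshev polynomials of the first kind on Γ = [−1,1]^d and any finite downward closed set Λ ⊆ ℕ₀^d, one has K(P_Λ) = sup_{y∈Γ} ∑_{ν∈Λ} |J_ν(y)|² ≤ (#Λ)^{ln 3 / ln 2}. -/

import Mathlib

def DownwardClosed {d : ℕ} (Λ : Finset (Fin d → ℕ)) : Prop :=
  ∀ ν ∈ Λ, ∀ μ : Fin d → ℕ, μ ≤ ν → μ ∈ Λ

/-- The univariate orthonormal Chebyshev polynomials of the first kind:
`J 0 = 1`, `J k t = √2 cos(k arccos t)` for `k ≥ 1`. -/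
noncomputable def chebJ (k : ℕ) (t : ℝ) : ℝ :=
  if k = 0 then 1 else Real.sqrt 2 * Real.cos (k * Real.arccos t)

open Real in
noncomputable def pp : ℝ := Real.log 3 / Real.log 2

lemma log2_pos : 0 < Real.log 2 := Real.log_pos one_lt_two

lemma pp_gt_one : 1 < pp := by
  rw [pp, lt_div_iff₀ log2_pos, one_mul]
  exact Real.log_lt_log two_pos (by norm_num)

lemma pp_lt_two : pp < 2 := by
  rw [pp, div_lt_iff₀ log2_pos]
  calc Real.log 3 < Real.log 4 := Real.log_lt_log three_pos (by norm_num)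
  _ = 2 * Real.log 2 := by
      rw [show (4:ℝ) = 2^(2:ℕ) by norm_num, Real.log_pow]; push_cast; ring

lemma two_rpow_pp : (2:ℝ) ^ pp = 3 := by
  rw [pp, Real.rpow_def_of_pos two_pos, mul_div_assoc', mul_comm,
    mul_div_assoc, div_self log2_pos.ne', mul_one, Real.exp_log three_pos]

noncomputable def gg : ℝ → ℝ := fun t => (1 + t) ^ pp - 2 * t ^ pp - 1

lemma gg_hasDeriv (t : ℝ) :
    HasDerivAt gg (pp * (1 + t) ^ (pp - 1) - 2 * (pp * t ^ (pp - 1))) t := by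
  have h1 : HasDerivAt (fun t : ℝ => (1 + t) ^ pp) (pp * (1 + t) ^ (pp - 1) * 1) t := by
    exact (Real.hasDerivAt_rpow_const (Or.inr pp_gt_one.le)).comp t
      ((hasDerivAt_id t).const_add 1)
  have h2 : HasDerivAt (fun t : ℝ => t ^ pp) (pp * t ^ (pp - 1)) t :=
    Real.hasDerivAt_rpow_const (Or.inr pp_gt_one.le)
  rw [show gg = fun t => (1 + t) ^ pp - 2 * t ^ pp - 1 from rfl]
  simpa using (h1.sub (h2.const_mul 2)).sub_const 1

lemma gg_nonneg {t : ℝ} (ht0 : 0 ≤ t) (ht1 : t ≤ 1) : 0 ≤ gg t := by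
  set c : ℝ := 2 ^ (1 / (pp - 1)) with hc
  have hp1 : 0 < pp - 1 := by linarith [pp_gt_one]
  have hinv : 1 < 1 / (pp - 1) := by
    rw [lt_div_iff₀ hp1]; linarith [pp_lt_two]
  have hc2 : 2 < c := by
    calc (2:ℝ) = 2 ^ (1:ℝ) := (Real.rpow_one 2).symm
    _ < c := Real.rpow_lt_rpow_of_exponent_lt one_lt_two hinv
  have hcpow : c ^ (pp - 1) = 2 := by
    rw [hc, ← Real.rpow_mul (by norm_num), one_div, inv_mul_cancel₀ hp1.ne', Real.rpow_one]
  set ts : ℝ := 1 / (c - 1) with hts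
  have hts0 : 0 < ts := div_pos one_pos (by linarith)
  have hts1 : ts < 1 := by
    rw [hts, div_lt_one (by linarith)]; linarith
  -- sign of derivative
  have hsign : ∀ u : ℝ, 0 ≤ u → (u ≤ ts → 0 ≤ deriv gg u) ∧ (ts ≤ u → deriv gg u ≤ 0) := by
    intro u hu
    rw [(gg_hasDeriv u).deriv]
    have hcu : 2 * u ^ (pp - 1) = (c * u) ^ (pp - 1) := by
      rw [Real.mul_rpow (by positivity) hu, hcpow]
    constructor
    · intro huts
      have hlin : c * u ≤ 1 + u := by
        have : (c - 1) * u ≤ (c - 1) * ts := by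
          apply mul_le_mul_of_nonneg_left huts (by linarith)
        rw [hts, mul_one_div, div_self (by linarith : c - 1 ≠ 0)] at this
        nlinarith
      have : 2 * u ^ (pp - 1) ≤ (1 + u) ^ (pp - 1) := by
        rw [hcu]; exact Real.rpow_le_rpow (by positivity) hlin hp1.le
      have hpp : 0 < pp := by linarith
      nlinarith
    · intro huts
      have hlin : 1 + u ≤ c * u := by
        have : (c - 1) * ts ≤ (c - 1) * u := by
          apply mul_le_mul_of_nonneg_left huts (by linarith)
        rw [hts, mul_one_div, div_self (by linarith : c - 1 ≠ 0)] at this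
        nlinarith
      have : (1 + u) ^ (pp - 1) ≤ 2 * u ^ (pp - 1) := by
        rw [hcu]; exact Real.rpow_le_rpow (by positivity) hlin hp1.le
      have hpp : 0 < pp := by linarith
      nlinarith
  have hdiff : Differentiable ℝ gg := fun u => (gg_hasDeriv u).differentiableAt
  have hmono : MonotoneOn gg (Set.Icc 0 ts) := by
    apply monotoneOn_of_deriv_nonneg (convex_Icc _ _) hdiff.continuous.continuousOn
      hdiff.differentiableOn
    intro x hx
    rw [interior_Icc] at hx
    exact (hsign x hx.1.le).1 hx.2.le
  have hanti : AntitoneOn gg (Set.Icc ts 1) := by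
    apply antitoneOn_of_deriv_nonpos (convex_Icc _ _) hdiff.continuous.continuousOn
      hdiff.differentiableOn
    intro x hx
    rw [interior_Icc] at hx
    exact (hsign x (hts0.trans hx.1).le).2 hx.1.le
  have hppne : pp ≠ 0 := (zero_lt_one.trans pp_gt_one).ne'
  have hg0 : gg 0 = 0 := by
    simp [gg, Real.zero_rpow hppne]
  have hg1 : gg 1 = 0 := by
    simp only [gg, Real.one_rpow, mul_one]
    rw [show (1:ℝ) + 1 = 2 by norm_num, two_rpow_pp]; ring
  rcases le_total t ts with h | h
  · have := hmono (Set.mem_Icc.2 ⟨le_refl 0, hts0.le⟩) (Set.mem_Icc.2 ⟨ht0, h⟩) ht0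
    rwa [hg0] at this
  · have := hanti (Set.mem_Icc.2 ⟨h, ht1⟩) (Set.mem_Icc.2 ⟨hts1.le, le_refl 1⟩) ht1
    rwa [hg1] at this

lemma step_ineq {a b : ℝ} (hb : 0 ≤ b) (hba : b ≤ a) :
    a ^ pp + 2 * b ^ pp ≤ (a + b) ^ pp := by
  rcases eq_or_lt_of_le (hb.trans hba) with h | ha
  · have hb0 : b = 0 := le_antisymm (hba.trans h.symm.le) hb
    simp [← h, hb0, Real.zero_rpow (zero_lt_one.trans pp_gt_one).ne']
  · have key := gg_nonneg (t := b / a) (by positivity) ((div_le_one ha).2 hba)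
    have h1 : ((1 : ℝ) + b / a) = (a + b) / a := by field_simp
    rw [gg, h1, Real.div_rpow (by positivity) ha.le, Real.div_rpow hb ha.le] at key
    have hap : 0 < a ^ pp := Real.rpow_pos_of_pos ha _
    have heq : (a + b) ^ pp / a ^ pp - 2 * (b ^ pp / a ^ pp) - 1
        = ((a + b) ^ pp - (a ^ pp + 2 * b ^ pp)) / a ^ pp := by field_simp; ring
    rw [heq] at key
    have := mul_nonneg key hap.le
    rw [div_mul_cancel₀ _ hap.ne'] at this
    linarith



lemma sum_step : ∀ (m : ℕ) (a : ℝ), 0 ≤ a → ∀ (b : ℕ → ℝ), (∀ k < m, 0 ≤ b k ∧ b k ≤ a) →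
    a ^ pp + 2 * ∑ k ∈ Finset.range m, b k ^ pp ≤ (a + ∑ k ∈ Finset.range m, b k) ^ pp := by
  intro m
  induction m with
  | zero => intro a ha b hb; simp
  | succ m ih =>
    intro a ha b hb
    have hbm := hb m (Nat.lt_succ_self m)
    rw [Finset.sum_range_succ, Finset.sum_range_succ]
    have h1 : a ^ pp + 2 * b m ^ pp ≤ (a + b m) ^ pp := step_ineq hbm.1 hbm.2
    have h2 := ih (a + b m) (by linarith) b
      (fun k hk => ⟨(hb k (hk.trans (Nat.lt_succ_self m))).1,
        (hb k (hk.trans (Nat.lt_succ_self m))).2.trans (by linarith)⟩)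
    calc a ^ pp + 2 * (∑ k ∈ Finset.range m, b k ^ pp + b m ^ pp)
        = (a ^ pp + 2 * b m ^ pp) + 2 * ∑ k ∈ Finset.range m, b k ^ pp := by ring
      _ ≤ (a + b m) ^ pp + 2 * ∑ k ∈ Finset.range m, b k ^ pp := by linarith
      _ ≤ (a + b m + ∑ k ∈ Finset.range m, b k) ^ pp := h2
      _ = (a + (∑ k ∈ Finset.range m, b k + b m)) ^ pp := by ring_nf

lemma comb : ∀ (d : ℕ) (Λ : Finset (Fin d → ℕ)), DownwardClosed Λ →
    ∑ ν ∈ Λ, (∏ j, if ν j = 0 then (1:ℝ) else 2) ≤ (Λ.card : ℝ) ^ pp := by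
  intro d
  induction d with
  | zero =>
    intro Λ hΛ
    simp only [Finset.univ_eq_empty, Finset.prod_empty, Finset.sum_const, nsmul_eq_mul, mul_one]
    rcases Nat.eq_zero_or_pos Λ.card with h | h
    · simp [h, Real.zero_rpow (zero_lt_one.trans pp_gt_one).ne']
    · have h1 : (1:ℝ) ≤ (Λ.card : ℝ) := by exact_mod_cast h
      calc (Λ.card : ℝ) = (Λ.card : ℝ) ^ (1:ℝ) := (Real.rpow_one _).symm
        _ ≤ (Λ.card : ℝ) ^ pp := Real.rpow_le_rpow_of_exponent_le h1 pp_gt_one.le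
  | succ d ih =>
    intro Λ hΛ
    set M := Λ.sup (fun ν => ν (Fin.last d)) with hM
    set Lk : ℕ → Finset (Fin d → ℕ) :=
      fun k => (Λ.filter (fun ν => ν (Fin.last d) = k)).image Fin.init with hLk
    have hmem : ∀ (k : ℕ) (ν' : Fin d → ℕ), ν' ∈ Lk k ↔ Fin.snoc ν' k ∈ Λ := by
      intro k ν'
      simp only [hLk, Finset.mem_image, Finset.mem_filter]
      constructor
      · rintro ⟨ν, ⟨hν, hlast⟩, rfl⟩
        rwa [← hlast, Fin.snoc_init_self]
      · intro h
        exact ⟨Fin.snoc ν' k, ⟨h, Fin.snoc_last ..⟩, Fin.init_snoc ..⟩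
    have hdc : ∀ k, DownwardClosed (Lk k) := by
      intro k ν' hν' μ' hle
      rw [hmem] at hν' ⊢
      apply hΛ _ hν'
      intro i
      refine Fin.lastCases ?_ ?_ i
      · simp
      · intro i; simpa using hle i
    have hsub : ∀ k, Lk k ⊆ Lk 0 := by
      intro k ν' h
      rw [hmem] at h ⊢
      apply hΛ _ h
      intro i
      refine Fin.lastCases ?_ ?_ i
      · simp
      · intro i; simp
    have hinj : ∀ k, Set.InjOn Fin.init
        ((Λ.filter (fun ν => ν (Fin.last d) = k)) : Set (Fin (d+1) → ℕ)) := by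
      intro k ν₁ h₁ ν₂ h₂ h
      simp only [Finset.coe_filter, Set.mem_setOf_eq] at h₁ h₂
      funext i
      refine Fin.lastCases ?_ ?_ i
      · rw [h₁.2, h₂.2]
      · intro i; exact congrFun h i
    have hcard : ∀ k, (Lk k).card = (Λ.filter (fun ν => ν (Fin.last d) = k)).card :=
      fun k => Finset.card_image_of_injOn (hinj k)
    have hΛcard : Λ.card = ∑ k ∈ Finset.range (M+1), (Lk k).card := by
      rw [Finset.card_eq_sum_card_fiberwise
        (f := fun ν => ν (Fin.last d)) (t := Finset.range (M+1))
        (fun ν hν => Finset.mem_range.2 (Nat.lt_succ_of_le (Finset.le_sup (f := fun ν => ν (Fin.last d)) hν)))]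
      exact Finset.sum_congr rfl fun k _ => (hcard k).symm
    have hfiber : ∀ k, ∑ ν ∈ Λ.filter (fun ν => ν (Fin.last d) = k),
        (∏ j, if ν j = 0 then (1:ℝ) else 2)
        = (if k = 0 then (1:ℝ) else 2) * ∑ ν' ∈ Lk k, (∏ j, if ν' j = 0 then (1:ℝ) else 2) := by
      intro k
      rw [Finset.mul_sum, hLk, Finset.sum_image (fun x hx y hy => hinj k hx hy)]
      apply Finset.sum_congr rfl
      intro ν hν
      simp only [Finset.mem_filter] at hν
      rw [Fin.prod_univ_castSucc, hν.2, mul_comm]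
      congr 1
    have hsplit : ∑ ν ∈ Λ, (∏ j, if ν j = 0 then (1:ℝ) else 2)
        = ∑ ν' ∈ Lk 0, (∏ j, if ν' j = 0 then (1:ℝ) else 2)
          + 2 * ∑ k ∈ Finset.range M, ∑ ν' ∈ Lk (k+1), (∏ j, if ν' j = 0 then (1:ℝ) else 2) := by
      rw [← Finset.sum_fiberwise_of_maps_to
        (g := fun ν => ν (Fin.last d)) (t := Finset.range (M+1))
        (fun ν hν => Finset.mem_range.2 (Nat.lt_succ_of_le (Finset.le_sup (f := fun ν => ν (Fin.last d)) hν)))]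
      rw [Finset.sum_congr rfl (fun k _ => hfiber k), Finset.sum_range_succ']
      simp only [Nat.succ_ne_zero, if_false, if_true, eq_self_iff_true, one_mul, Finset.mul_sum]
      exact add_comm _ _
    rw [hsplit]
    have hb : ∀ k < M, (0:ℝ) ≤ ((Lk (k+1)).card : ℝ) ∧ ((Lk (k+1)).card : ℝ) ≤ ((Lk 0).card : ℝ) := by
      intro k _
      exact ⟨Nat.cast_nonneg _, Nat.cast_le.2 (Finset.card_le_card (hsub (k+1)))⟩
    calc ∑ ν' ∈ Lk 0, (∏ j, if ν' j = 0 then (1:ℝ) else 2)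
          + 2 * ∑ k ∈ Finset.range M, ∑ ν' ∈ Lk (k+1), (∏ j, if ν' j = 0 then (1:ℝ) else 2)
        ≤ ((Lk 0).card : ℝ) ^ pp + 2 * ∑ k ∈ Finset.range M, ((Lk (k+1)).card : ℝ) ^ pp := by
          have h0 := ih (Lk 0) (hdc 0)
          have hk : ∀ k ∈ Finset.range M,
              ∑ ν' ∈ Lk (k+1), (∏ j, if ν' j = 0 then (1:ℝ) else 2)
                ≤ ((Lk (k+1)).card : ℝ) ^ pp := fun k _ => ih (Lk (k+1)) (hdc (k+1))
          have := Finset.sum_le_sum hk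
          linarith
      _ ≤ (((Lk 0).card : ℝ) + ∑ k ∈ Finset.range M, ((Lk (k+1)).card : ℝ)) ^ pp :=
          sum_step M _ (Nat.cast_nonneg _) _ hb
      _ = ((Λ.card : ℝ)) ^ pp := by
          congr 1
          rw [hΛcard, Finset.sum_range_succ']
          push_cast
          ring

lemma chebJ_sq_le (k : ℕ) (t : ℝ) : (chebJ k t) ^ 2 ≤ if k = 0 then (1:ℝ) else 2 := by
  unfold chebJ
  split
  · norm_num
  · rw [mul_pow, Real.sq_sqrt (by norm_num : (0:ℝ) ≤ 2)]
    nlinarith [Real.cos_sq_le_one (k * Real.arccos t)]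


/-- For tensorized Chebyshev polynomials and any finite downward closed `Λ ⊆ ℕ₀^d`,
`K(P_Λ) = sup_{y∈[−1,1]^d} ∑_{ν∈Λ} |J_ν(y)|² ≤ (#Λ)^{ln 3 / ln 2}`. -/
theorem chebyshev_K_bound (d : ℕ) (Λ : Finset (Fin d → ℕ)) (hΛ : DownwardClosed Λ)
    (y : Fin d → ℝ) (hy : ∀ j, y j ∈ Set.Icc (-1 : ℝ) 1) :
    ∑ ν ∈ Λ, (∏ j, chebJ (ν j) (y j)) ^ 2 ≤
      (Λ.card : ℝ) ^ (Real.log 3 / Real.log 2) := by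
  calc ∑ ν ∈ Λ, (∏ j, chebJ (ν j) (y j)) ^ 2
      ≤ ∑ ν ∈ Λ, (∏ j, if ν j = 0 then (1:ℝ) else 2) := by
        apply Finset.sum_le_sum
        intro ν _
        rw [← Finset.prod_pow]
        exact Finset.prod_le_prod (fun j _ => sq_nonneg _) (fun j _ => chebJ_sq_le _ _)
    _ ≤ (Λ.card : ℝ) ^ (Real.log 3 / Real.log 2) := comb d Λ hΛ
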